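/- Let f : ℝⁿ → ℝⁿ be continuously differentiable on a neighborhood of x* with f(x*) = 0, and let (M_k) be a sequence of invertible n×n real matrices such that for some constants c < 1 and β > 0 one has ‖I − M_k⁻¹ f'(x*)‖ ≤ c and ‖M_k⁻¹‖ ≤ β for all k (operator norms). Then for every c' with c < c' < 1 there exists δ > 0 such that whenever ‖x₀ − x*‖ ≤ δ, the iterates x_{k+1} = x_k − M_k⁻¹ f(x_k) satisfy ‖x_{k+1} − x*‖ ≤ c' ‖x_k − x*‖ for all k, and consequently x_k → x*. -/

import Mathlib

/-- Local q-linear convergence of the preconditioned iteration: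
if `f` is continuously differentiable on a neighborhood of a root `x*`, and the
invertible preconditioners `M_k` satisfy `‖I − M_k⁻¹ f'(x*)‖ ≤ c < 1` and
`‖M_k⁻¹‖ ≤ β` uniformly, then for every `c' ∈ (c, 1)` there is `δ > 0` such that
iterates starting with `‖x₀ − x*‖ ≤ δ` satisfy
`‖x_{k+1} − x*‖ ≤ c' ‖x_k − x*‖` for all `k`, and hence `x_k → x*`. -/
theorem preconditioned_iteration_local_linear_convergence
    (n : ℕ) (f : EuclideanSpace ℝ (Fin n) → EuclideanSpace ℝ (Fin n))
    (xstar : EuclideanSpace ℝ (Fin n)) (hf0 : f xstar = 0)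
    (s : Set (EuclideanSpace ℝ (Fin n))) (hs : s ∈ nhds xstar)
    (J' : EuclideanSpace ℝ (Fin n) →
      (EuclideanSpace ℝ (Fin n) →L[ℝ] EuclideanSpace ℝ (Fin n)))
    (hderiv : ∀ x ∈ s, HasFDerivAt f (J' x) x)
    (hcont : ContinuousOn J' s)
    (M : ℕ → Matrix (Fin n) (Fin n) ℝ) (hM : ∀ k, IsUnit (M k))
    (c β : ℝ) (hc : c < 1) (hβ : 0 < β)
    (hMc : ∀ k, ‖ContinuousLinearMap.id ℝ (EuclideanSpace ℝ (Fin n)) -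
        (Matrix.toEuclideanCLM (𝕜 := ℝ) (M k)⁻¹).comp (J' xstar)‖ ≤ c)
    (hMβ : ∀ k, ‖(Matrix.toEuclideanCLM (𝕜 := ℝ) (M k)⁻¹ :
        EuclideanSpace ℝ (Fin n) →L[ℝ] EuclideanSpace ℝ (Fin n))‖ ≤ β) :
    ∀ c' : ℝ, c < c' → c' < 1 → ∃ δ > (0 : ℝ),
      ∀ x : ℕ → EuclideanSpace ℝ (Fin n), ‖x 0 - xstar‖ ≤ δ →
        (∀ k, x (k + 1) = x k - Matrix.toEuclideanCLM (𝕜 := ℝ) (M k)⁻¹ (f (x k))) →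
        (∀ k, ‖x (k + 1) - xstar‖ ≤ c' * ‖x k - xstar‖) ∧
          Filter.Tendsto x Filter.atTop (nhds xstar) := by
  intro c' hcc' hc'1
  have hxs : xstar ∈ s := mem_of_mem_nhds hs
  have hc0 : 0 ≤ c := le_trans (norm_nonneg _) (hMc 0)
  have hc'0 : 0 < c' := lt_of_le_of_lt hc0 hcc'
  set ε : ℝ := (c' - c) / β with hεdef
  have hε0 : 0 < ε := div_pos (by linarith) hβ
  have hJc : ContinuousAt J' xstar := hcont.continuousAt hs
  obtain ⟨δ₁, hδ₁0, hδ₁⟩ := Metric.continuousAt_iff.mp hJc ε hε0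
  obtain ⟨δ₂, hδ₂0, hδ₂⟩ := Metric.mem_nhds_iff.mp hs
  set δ : ℝ := min δ₁ δ₂ / 2 with hδdef
  have hδ0 : 0 < δ := by positivity
  have hδ₁' : δ < δ₁ := by
    have := min_le_left δ₁ δ₂; simp only [hδdef]; linarith
  have hδ₂' : δ < δ₂ := by
    have := min_le_right δ₁ δ₂; simp only [hδdef]; linarith
  have hball : Metric.closedBall xstar δ ⊆ s := fun z hz => by
    apply hδ₂
    exact Metric.mem_ball.mpr (lt_of_le_of_lt (Metric.mem_closedBall.mp hz) hδ₂')
  have hJbound : ∀ z ∈ Metric.closedBall xstar δ, ‖J' z - J' xstar‖ ≤ ε := by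
    intro z hz
    have : dist z xstar < δ₁ := lt_of_le_of_lt (Metric.mem_closedBall.mp hz) hδ₁'
    have := hδ₁ this
    rw [dist_eq_norm] at this
    exact le_of_lt this
  -- key one-step estimate
  have key : ∀ (k : ℕ) (y : EuclideanSpace ℝ (Fin n)), ‖y - xstar‖ ≤ δ →
      ‖(y - Matrix.toEuclideanCLM (𝕜 := ℝ) (M k)⁻¹ (f y)) - xstar‖ ≤ c' * ‖y - xstar‖ := by
    intro k y hy
    set A := (Matrix.toEuclideanCLM (𝕜 := ℝ) (M k)⁻¹ :
      EuclideanSpace ℝ (Fin n) →L[ℝ] EuclideanSpace ℝ (Fin n)) with hA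
    set J := J' xstar with hJ
    have hyball : y ∈ Metric.closedBall xstar δ := by
      rw [Metric.mem_closedBall, dist_eq_norm]; exact hy
    have hxball : xstar ∈ Metric.closedBall xstar δ := Metric.mem_closedBall_self hδ0.le
    have htaylor : ‖f y - f xstar - J (y - xstar)‖ ≤ ε * ‖y - xstar‖ := by
      apply Convex.norm_image_sub_le_of_norm_hasFDerivWithin_le'
        (f' := fun z => J' z) (fun z hz => (hderiv z (hball hz)).hasFDerivWithinAt)
        (fun z hz => hJbound z hz) (convex_closedBall _ _) hxball hyball
    have hid : (y - A (f y)) - xstar =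
        (ContinuousLinearMap.id ℝ (EuclideanSpace ℝ (Fin n)) - A.comp J) (y - xstar)
          - A (f y - f xstar - J (y - xstar)) := by
      simp only [ContinuousLinearMap.sub_apply, ContinuousLinearMap.id_apply,
        ContinuousLinearMap.coe_comp', Function.comp_apply, map_sub, hf0, map_zero]
      abel
    calc ‖(y - A (f y)) - xstar‖
        ≤ ‖(ContinuousLinearMap.id ℝ (EuclideanSpace ℝ (Fin n)) - A.comp J) (y - xstar)‖
          + ‖A (f y - f xstar - J (y - xstar))‖ := by rw [hid]; exact norm_sub_le _ _
      _ ≤ c * ‖y - xstar‖ + β * (ε * ‖y - xstar‖) := by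
          gcongr
          · exact le_trans ((ContinuousLinearMap.id ℝ _ - A.comp J).le_opNorm _)
              (by gcongr; exact hMc k)
          · exact le_trans (A.le_opNorm _) (by gcongr; exact hMβ k)
      _ = c' * ‖y - xstar‖ := by
          have : β * ε = c' - c := by rw [hεdef]; field_simp [hβ.ne']
          linear_combination ‖y - xstar‖ * this
  refine ⟨δ, hδ0, fun x hx0 hrec => ?_⟩
  have hin : ∀ k, ‖x k - xstar‖ ≤ δ := by
    intro k
    induction k with
    | zero => exact hx0
    | succ k ih =>
      rw [hrec k]
      calc ‖(x k - Matrix.toEuclideanCLM (𝕜 := ℝ) (M k)⁻¹ (f (x k))) - xstar‖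
          ≤ c' * ‖x k - xstar‖ := key k (x k) ih
        _ ≤ 1 * δ := by
            apply mul_le_mul (le_of_lt hc'1) ih (norm_nonneg _) zero_le_one
        _ = δ := one_mul δ
  have hstep : ∀ k, ‖x (k + 1) - xstar‖ ≤ c' * ‖x k - xstar‖ := by
    intro k; rw [hrec k]; exact key k (x k) (hin k)
  refine ⟨hstep, ?_⟩
  have hgeo : ∀ k, ‖x k - xstar‖ ≤ c' ^ k * δ := by
    intro k
    induction k with
    | zero => simpa using hx0
    | succ k ih =>
      calc ‖x (k + 1) - xstar‖ ≤ c' * ‖x k - xstar‖ := hstep k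
        _ ≤ c' * (c' ^ k * δ) := by gcongr
        _ = c' ^ (k + 1) * δ := by ring
  rw [tendsto_iff_norm_sub_tendsto_zero]
  apply squeeze_zero (fun k => norm_nonneg _) hgeo
  have : Filter.Tendsto (fun k : ℕ => c' ^ k) Filter.atTop (nhds 0) :=
    tendsto_pow_atTop_nhds_zero_of_lt_one hc'0.le hc'1
  simpa using this.mul_const δ
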